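/- arXiv:2511.00257 — 2 statements merged into one kernel-verified Lean document; each statement's English description precedes it below -/
import Mathlib

section
/- In the reduced BwE setting, let S be any strategy in the pool, let u* ∈ {0, 1, …, k} be its special batch, and let T* be any horizon. For any learner, let T_{u*} denote the (random) number of rounds t ∈ {1, …, T*} in which the learner pulls an arm of batch u* (where arm 0 constitutes batch 0). Then the learner's pseudo-regret over T* rounds against S satisfies R_{T*} ≥ (ε/2)·E[ T* − T_{u*} ]. -/
open scoped BigOperators ENNReal

/-! ## The reduced BwE setting

There are `K = 2k+1` arms: arm `0` (encoded `none`) and arms `(u,i)` for `u ∈ [k]`,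
`i ∈ {0,1}` (encoded `some (u, i)`), and `N = kn+1` experts: expert `0` (encoded `none`,
always advising arm `0`) and experts `(u,v)` for `u ∈ [k]`, `v ∈ [n]`
(encoded `some (u, v)`, advising arm `(u, a_t^{(u,v)})`). -/

/-- An arm: `none` is arm `0`, `some (u, i)` is arm `(u,i)` of batch `u`. -/
abbrev RArm (k : ℕ) := Option (Fin k × Bool)

/-- The advice state: for each batch `u`, the advice vector `a^{(u)} ∈ {0,1}ⁿ`. -/
abbrev RAdviceM (k n : ℕ) := Fin k → Fin n → Bool

/-- An expert: `none` is expert `0`, `some (u, v)` is expert `(u,v)` of batch `u`. -/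
abbrev RExpert (k n : ℕ) := Option (Fin k × Fin n)

/-- The loss state of a round: the correct arm `c_u` of every batch `u` (the arm
`(u, c_u)` has loss `0` and the arm `(u, ¬c_u)` has loss `1`), together with the
binary loss of arm `0`. -/
abbrev RLossState (k : ℕ) := (Fin k → Bool) × Bool

/-- A full record of one round: the advice state, the loss state, and the pulled arm. -/
abbrev RRecord (k n : ℕ) := RAdviceM k n × RLossState k × RArm k

/-- What the learner observes in one round: the advice state, the arm it pulled,
and the loss of that arm only. -/
abbrev RObs (k n : ℕ) := RAdviceM k n × RArm k × Bool

/-- A strategy from the pool: `none` is `S_0`, and `some (u*, v*)` is `S_{(u*,v*)}`. -/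
abbrev RStrategy (k n : ℕ) := Option (Fin k × Fin n)

/-- The `{0,1}`-loss (as a `Bool`, `true` = loss `1`) of an arm, given the loss state. -/
def armLoss {k : ℕ} (L : RLossState k) : RArm k → Bool
  | none => L.2
  | some (u, i) => if i = L.1 u then false else true

/-- The loss of an arm as a real number in `{0,1}`. -/
noncomputable def lossVal (b : Bool) : ℝ := if b then 1 else 0

/-- The batch of an arm (`none` = batch `0`). -/
def armBatch {k : ℕ} : RArm k → Option (Fin k) := Option.map Prod.fst

/-- The arm advised by an expert, given the advice state. -/
def expertArm {k n : ℕ} (A : RAdviceM k n) : RExpert k n → RArm k :=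
  Option.map fun p => (p.1, A p.1 p.2)

/-- The special batch of a strategy: batch `0` (i.e. `none`) for `S_0`,
and batch `u*` for `S_{(u*,v*)}`. -/
def specialBatch {k n : ℕ} : RStrategy k n → Option (Fin k) := Option.map Prod.fst

/-- Density of the advice process given the history (most recent record first):
in the first round the advice state is uniform; afterwards, batch `u`'s advice vector
is resampled uniformly from `{0,1}ⁿ` if an arm of batch `u` was pulled in the previous
round, and is kept unchanged otherwise. -/
noncomputable def adviceDensity {k n : ℕ} (hist : List (RRecord k n)) (A : RAdviceM k n) : ℝ :=
  match hist with
  | [] => (1 / 2 : ℝ) ^ (k * n)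
  | r :: _ =>
      ∏ u : Fin k,
        if armBatch r.2.2 = some u then (1 / 2 : ℝ) ^ n
        else if A u = r.1 u then 1 else 0

/-- Density of the correct arm of batch `u`: uniform under `S_0` and for all
non-special batches; under `S_{(u*,v*)}` the correct arm of batch `u*` equals
the advice `a^{(u*,v*)}` of expert `(u*,v*)` with probability `1/2 + ε`. -/
noncomputable def batchFactor {k n : ℕ} (ε : ℝ) (s : RStrategy k n) (A : RAdviceM k n)
    (c : Fin k → Bool) (u : Fin k) : ℝ :=
  match s with
  | none => 1 / 2
  | some (u', v') =>
      if u = u' then (if c u = A u v' then 1 / 2 + ε else 1 / 2 - ε) else 1 / 2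

/-- Density of the loss state: arm `0` has loss `1` with probability `1/2 − ε/2`
(i.e. `ℓ_t(0) ∼ Ber(1/2 − ε/2)`), and the correct arms are drawn independently
according to `batchFactor`. -/
noncomputable def lossDensity {k n : ℕ} (ε : ℝ) (s : RStrategy k n) (A : RAdviceM k n)
    (L : RLossState k) : ℝ :=
  (if L.2 then 1 / 2 - ε / 2 else 1 / 2 + ε / 2) * ∏ u : Fin k, batchFactor ε s A L.1 u

/-- Density of the adversary's round output (advice state and loss state) given the
history, under strategy `s` with bias `ε`. -/
noncomputable def stratDensity {k n : ℕ} (ε : ℝ) (s : RStrategy k n)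
    (hist : List (RRecord k n)) (A : RAdviceM k n) (L : RLossState k) : ℝ :=
  adviceDensity hist A * lossDensity ε s A L

/-- A (randomized) learner: given the observed history (most recent first) and the
current round's advice state, a density over which arm to pull. -/
def RLearner (k n : ℕ) := List (RObs k n) → RAdviceM k n → RArm k → ℝ

/-- The learner's values form probability distributions over arms. -/
def IsRLearner {k n : ℕ} (f : RLearner k n) : Prop :=
  ∀ h A, (∀ i, 0 ≤ f h A i) ∧ ∑ i : RArm k, f h A i = 1

/-- The learner's observation extracted from a full record: it sees the advice,
its pulled arm, and only the loss of the pulled arm. -/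
def obsOf {k n : ℕ} (r : RRecord k n) : RObs k n := (r.1, r.2.2, armLoss r.2.1 r.2.2)

/-- The history of the first `t` rounds of a trajectory, most recent first. -/
def histUpTo {k n T : ℕ} (g : Fin T → RRecord k n) (t : ℕ) : List (RRecord k n) :=
  ((List.ofFn g).take t).reverse

/-- The learner's observed history of the first `t` rounds, most recent first. -/
def obsHist {k n T : ℕ} (g : Fin T → RRecord k n) (t : ℕ) : List (RObs k n) :=
  (histUpTo g t).map obsOf

/-- Probability of a full `T`-round trajectory under strategy `s` and learner `L`
(product of the adversary's and the learner's densities, round by round). -/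
noncomputable def trajProb {k n : ℕ} (ε : ℝ) (s : RStrategy k n) (L : RLearner k n) (T : ℕ)
    (g : Fin T → RRecord k n) : ℝ :=
  ∏ t : Fin T,
    stratDensity ε s (histUpTo g t) (g t).1 (g t).2.1 *
      L (obsHist g t) (g t).1 (g t).2.2

/-- Expectation of a trajectory functional over the `T`-round interaction. -/
noncomputable def expectR {k n : ℕ} (ε : ℝ) (s : RStrategy k n) (L : RLearner k n) (T : ℕ)
    (f : (Fin T → RRecord k n) → ℝ) : ℝ :=
  ∑ g : Fin T → RRecord k n, trajProb ε s L T g * f g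

/-- The realized regret of a trajectory against expert `j`:
`Σ_t (ℓ_t(I_t) − ℓ_t(e_t(j)))`. -/
noncomputable def regretVs {k n T : ℕ} (g : Fin T → RRecord k n) (j : RExpert k n) : ℝ :=
  ∑ t : Fin T,
    (lossVal (armLoss (g t).2.1 (g t).2.2) - lossVal (armLoss (g t).2.1 (expertArm (g t).1 j)))

/-- The pseudo-regret over `T` rounds: `max_j E[Σ_t (ℓ_t(I_t) − ℓ_t(e_t(j)))]`. -/
noncomputable def pseudoRegret {k n : ℕ} (ε : ℝ) (s : RStrategy k n) (L : RLearner k n)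
    (T : ℕ) : ℝ :=
  ⨆ j : RExpert k n, expectR ε s L T fun g => regretVs g j


section BwEProofAux

open Finset

variable {k n : ℕ}

/-! ### Nonnegativity -/

lemma adviceDensity_nonneg (hist : List (RRecord k n)) (A : RAdviceM k n) :
    0 ≤ adviceDensity hist A := by
  cases hist with
  | nil =>
      simp only [adviceDensity]
      positivity
  | cons r tl =>
      simp only [adviceDensity]
      refine Finset.prod_nonneg fun u _ => ?_
      split_ifs <;> positivity

lemma batchFactor_nonneg {ε : ℝ} (hε0 : 0 ≤ ε) (hε2 : ε ≤ 1/2) (s : RStrategy k n)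
    (A : RAdviceM k n) (c : Fin k → Bool) (u : Fin k) :
    0 ≤ batchFactor ε s A c u := by
  cases s with
  | none => norm_num [batchFactor]
  | some p =>
      obtain ⟨u', v'⟩ := p
      simp only [batchFactor]
      split_ifs <;> linarith

lemma lossDensity_nonneg {ε : ℝ} (hε0 : 0 ≤ ε) (hε2 : ε ≤ 1/2) (s : RStrategy k n)
    (A : RAdviceM k n) (Ls : RLossState k) : 0 ≤ lossDensity ε s A Ls := by
  refine mul_nonneg ?_ (Finset.prod_nonneg fun u _ => batchFactor_nonneg hε0 hε2 s A Ls.1 u)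
  split_ifs <;> linarith

lemma stratDensity_nonneg {ε : ℝ} (hε0 : 0 ≤ ε) (hε2 : ε ≤ 1/2) (s : RStrategy k n)
    (hist : List (RRecord k n)) (A : RAdviceM k n) (Ls : RLossState k) :
    0 ≤ stratDensity ε s hist A Ls :=
  mul_nonneg (adviceDensity_nonneg _ _) (lossDensity_nonneg hε0 hε2 _ _ _)

lemma trajProb_nonneg {ε : ℝ} (hε0 : 0 ≤ ε) (hε2 : ε ≤ 1/2) (s : RStrategy k n)
    {L : RLearner k n} (hL : IsRLearner L) (T : ℕ) (g : Fin T → RRecord k n) :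
    0 ≤ trajProb ε s L T g :=
  Finset.prod_nonneg fun t _ =>
    mul_nonneg (stratDensity_nonneg hε0 hε2 s _ _ _) ((hL _ _).1 _)

/-! ### Single-coordinate marginals -/

/-- `batchFactor` as a function of the single relevant coordinate. -/
noncomputable def bf (ε : ℝ) (s : RStrategy k n) (A : RAdviceM k n) (u : Fin k) (b : Bool) : ℝ :=
  batchFactor ε s A (fun _ => b) u

lemma batchFactor_eq_bf (ε : ℝ) (s : RStrategy k n) (A : RAdviceM k n) (c : Fin k → Bool)
    (u : Fin k) : batchFactor ε s A c u = bf ε s A u (c u) := by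
  cases s with
  | none => rfl
  | some p => rfl

lemma sum_bf (ε : ℝ) (s : RStrategy k n) (A : RAdviceM k n) (u : Fin k) :
    ∑ b : Bool, bf ε s A u b = 1 := by
  cases s with
  | none => norm_num [bf, batchFactor, Fintype.sum_bool]
  | some p =>
      obtain ⟨u', v'⟩ := p
      by_cases hu : u = u'
      · subst hu
        cases hA : A u v' <;> (simp [bf, batchFactor, Fintype.sum_bool, hA]; try ring)
      · simp [bf, batchFactor, hu, Fintype.sum_bool]
        try norm_num

lemma sum_prod_bf (ε : ℝ) (s : RStrategy k n) (A : RAdviceM k n) :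
    ∑ c : Fin k → Bool, ∏ u, bf ε s A u (c u) = 1 := by
  rw [← Fintype.prod_sum (f := fun u b => bf ε s A u b)]
  exact Finset.prod_eq_one fun u _ => sum_bf ε s A u

lemma sum_prod_bf_marg (ε : ℝ) (s : RStrategy k n) (A : RAdviceM k n) (u0 : Fin k)
    (φ : Bool → ℝ) :
    ∑ c : Fin k → Bool, (∏ u, bf ε s A u (c u)) * φ (c u0)
      = ∑ b : Bool, bf ε s A u0 b * φ b := by
  have h1 : ∀ c : Fin k → Bool,
      (∏ u, bf ε s A u (c u)) * φ (c u0)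
        = ∏ u, (bf ε s A u (c u) * if u0 = u then φ (c u) else 1) := by
    intro c
    rw [Finset.prod_mul_distrib, Finset.prod_ite_eq]
    simp
  rw [Finset.sum_congr rfl fun c _ => h1 c,
      ← Fintype.prod_sum (f := fun u b => bf ε s A u b * if u0 = u then φ b else 1)]
  have h2 : ∀ u : Fin k,
      (∑ b : Bool, bf ε s A u b * if u0 = u then φ b else 1)
        = if u0 = u then ∑ b : Bool, bf ε s A u0 b * φ b else 1 := by
    intro u
    by_cases h : u0 = u
    · subst h; simp
    · simp only [if_neg h, mul_one]
      exact sum_bf ε s A u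
  rw [Finset.prod_congr rfl fun u _ => h2 u, Finset.prod_ite_eq]
  simp

lemma sum_prod_batchFactor (ε : ℝ) (s : RStrategy k n) (A : RAdviceM k n) :
    ∑ c : Fin k → Bool, ∏ u, batchFactor ε s A c u = 1 := by
  rw [Finset.sum_congr rfl fun c _ =>
    Finset.prod_congr rfl fun u _ => batchFactor_eq_bf ε s A c u]
  exact sum_prod_bf ε s A

lemma sum_prod_batchFactor_marg (ε : ℝ) (s : RStrategy k n) (A : RAdviceM k n) (u0 : Fin k)
    (φ : Bool → ℝ) :
    ∑ c : Fin k → Bool, (∏ u, batchFactor ε s A c u) * φ (c u0)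
      = ∑ b : Bool, bf ε s A u0 b * φ b := by
  rw [Finset.sum_congr rfl fun c _ => by
    rw [Finset.prod_congr rfl fun u _ => batchFactor_eq_bf ε s A c u]]
  exact sum_prod_bf_marg ε s A u0 φ

/-! ### Normalization -/

lemma sum_w0 (ε : ℝ) :
    ∑ b : Bool, (if b then 1/2 - ε/2 else 1/2 + ε/2 : ℝ) = 1 := by
  simp [Fintype.sum_bool]
  ring

lemma sum_lossDensity (ε : ℝ) (s : RStrategy k n) (A : RAdviceM k n) :
    ∑ Ls : RLossState k, lossDensity ε s A Ls = 1 := by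
  rw [Fintype.sum_prod_type]
  have h1 : ∀ c : Fin k → Bool,
      (∑ b : Bool, lossDensity ε s A (c, b)) = ∏ u, batchFactor ε s A c u := by
    intro c
    simp only [lossDensity]
    rw [← Finset.sum_mul, sum_w0, one_mul]
  rw [Finset.sum_congr rfl fun c _ => h1 c]
  exact sum_prod_batchFactor ε s A

lemma sum_adviceDensity (hist : List (RRecord k n)) :
    ∑ A : RAdviceM k n, adviceDensity hist A = 1 := by
  cases hist with
  | nil =>
      simp only [adviceDensity]
      rw [Finset.sum_const, Finset.card_univ, nsmul_eq_mul]
      have hcard : Fintype.card (RAdviceM k n) = 2 ^ (k * n) := by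
        rw [Fintype.card_fun, Fintype.card_fun, Fintype.card_bool, Fintype.card_fin,
          Fintype.card_fin, ← pow_mul, Nat.mul_comm]
      rw [hcard]
      push_cast
      rw [← mul_pow]
      norm_num
  | cons r tl =>
      simp only [adviceDensity]
      rw [← Fintype.prod_sum (f := fun (u : Fin k) (x : Fin n → Bool) =>
        if armBatch r.2.2 = some u then ((1:ℝ)/2) ^ n else if x = r.1 u then 1 else 0)]
      refine Finset.prod_eq_one fun u _ => ?_
      by_cases h : armBatch r.2.2 = some u
      · rw [Finset.sum_congr rfl fun (x : Fin n → Bool) _ => if_pos h,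
          Finset.sum_const, Finset.card_univ, nsmul_eq_mul, Fintype.card_fun,
          Fintype.card_bool, Fintype.card_fin]
        push_cast
        rw [← mul_pow]
        norm_num
      · rw [Finset.sum_congr rfl fun (x : Fin n → Bool) _ => if_neg h]
        simp

lemma sum_step (ε : ℝ) (s : RStrategy k n) {L : RLearner k n} (hL : IsRLearner L)
    (hist : List (RRecord k n)) (obsh : List (RObs k n)) :
    ∑ r : RRecord k n, stratDensity ε s hist r.1 r.2.1 * L obsh r.1 r.2.2 = 1 := by
  rw [Fintype.sum_prod_type]
  have hA : ∀ A : RAdviceM k n,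
      (∑ p : RLossState k × RArm k, stratDensity ε s hist A p.1 * L obsh A p.2)
        = adviceDensity hist A := by
    intro A
    rw [Fintype.sum_prod_type]
    have h1 : ∀ Ls : RLossState k,
        (∑ a : RArm k, stratDensity ε s hist A Ls * L obsh A a)
          = stratDensity ε s hist A Ls := by
      intro Ls
      rw [← Finset.mul_sum, (hL obsh A).2, mul_one]
    rw [Finset.sum_congr rfl fun Ls _ => h1 Ls]
    show ∑ Ls : RLossState k, adviceDensity hist A * lossDensity ε s A Ls = adviceDensity hist A
    rw [← Finset.mul_sum, sum_lossDensity, mul_one]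
  rw [Finset.sum_congr rfl fun A _ => hA A]
  exact sum_adviceDensity hist

/-! ### Expected losses -/

/-- Expected loss of an arm under `lossDensity`. -/
noncomputable def armEL (ε : ℝ) (s : RStrategy k n) (A : RAdviceM k n) : RArm k → ℝ
  | none => 1/2 - ε/2
  | some (u, i) => bf ε s A u (!i)

lemma sum_lossDensity_mul_armLoss (ε : ℝ) (s : RStrategy k n) (A : RAdviceM k n) (a : RArm k) :
    ∑ Ls : RLossState k, lossDensity ε s A Ls * lossVal (armLoss Ls a) = armEL ε s A a := by
  rw [Fintype.sum_prod_type]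
  cases a with
  | none =>
      have h1 : ∀ c : Fin k → Bool,
          (∑ b : Bool, lossDensity ε s A (c, b) * lossVal (armLoss (c, b) none))
            = (∏ u, batchFactor ε s A c u) * (1/2 - ε/2) := by
        intro c
        simp only [lossDensity, armLoss, lossVal, Fintype.sum_bool]
        norm_num
        ring
      rw [Finset.sum_congr rfl fun c _ => h1 c, ← Finset.sum_mul, sum_prod_batchFactor,
        one_mul]
      rfl
  | some p =>
      obtain ⟨u, i⟩ := p
      have h1 : ∀ c : Fin k → Bool,
          (∑ b : Bool, lossDensity ε s A (c, b) * lossVal (armLoss (c, b) (some (u, i))))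
            = (∏ u', batchFactor ε s A c u') * (if i = c u then (0:ℝ) else 1) := by
        intro c
        by_cases h : i = c u <;>
          simp only [lossDensity, armLoss, lossVal, Fintype.sum_bool, h, if_pos, if_neg,
            if_true, if_false, ite_true, ite_false] <;>
          simp [h] <;> ring
      rw [Finset.sum_congr rfl fun c _ => h1 c,
        sum_prod_batchFactor_marg ε s A u (fun x => if i = x then (0:ℝ) else 1)]
      cases i <;> simp [Fintype.sum_bool, armEL]

/-! ### The per-round functional and its conditional expectation -/

/-- Per-round regret (against expert `s`) minus `ε/2` times the indicator of not
pulling the special batch. -/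
noncomputable def dFun (ε : ℝ) (s : RStrategy k n) (r : RRecord k n) : ℝ :=
  (lossVal (armLoss r.2.1 r.2.2) - lossVal (armLoss r.2.1 (expertArm r.1 s)))
    - ε / 2 * (if armBatch r.2.2 = specialBatch s then 0 else 1)

lemma key_nonneg {ε : ℝ} (hε0 : 0 ≤ ε) (s : RStrategy k n) (A : RAdviceM k n) (a : RArm k) :
    0 ≤ ∑ Ls : RLossState k, lossDensity ε s A Ls * dFun ε s (A, Ls, a) := by
  have hsum : (∑ Ls : RLossState k, lossDensity ε s A Ls * dFun ε s (A, Ls, a))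
      = armEL ε s A a - armEL ε s A (expertArm A s)
        - ε / 2 * (if armBatch a = specialBatch s then 0 else 1) := by
    have h3 : (∑ Ls : RLossState k, lossDensity ε s A Ls *
        (ε / 2 * if armBatch a = specialBatch s then 0 else 1))
        = ε / 2 * (if armBatch a = specialBatch s then 0 else 1) := by
      rw [← Finset.sum_mul, sum_lossDensity, one_mul]
    simp only [dFun, mul_sub]
    rw [Finset.sum_sub_distrib, Finset.sum_sub_distrib,
      sum_lossDensity_mul_armLoss, sum_lossDensity_mul_armLoss, h3]
  rw [hsum]
  cases s with
  | none =>
      cases a with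
      | none => simp [armEL, expertArm, armBatch, specialBatch]
      | some p =>
          obtain ⟨u, i⟩ := p
          simp [armEL, expertArm, armBatch, specialBatch, bf, batchFactor]
          try ring_nf
          try linarith
  | some q =>
      obtain ⟨u', v'⟩ := q
      have hEe : armEL ε (some (u', v')) A (expertArm A (some (u', v'))) = 1/2 - ε := by
        simp only [expertArm, Option.map_some, armEL, bf, batchFactor]
        cases hA : A u' v' <;> simp [hA]
      rw [hEe]
      cases a with
      | none =>
          simp [armEL, armBatch, specialBatch]
          linarith
      | some p =>
          obtain ⟨u, i⟩ := p
          simp only [armEL, armBatch, specialBatch, Option.map_some]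
          by_cases hu : u = u'
          · subst hu
            simp only [if_pos rfl, bf, batchFactor, if_pos rfl]
            split_ifs <;> linarith
          · have : (some u : Option (Fin k)) ≠ some u' := by simpa using hu
            erw [if_neg this]
            simp only [bf, batchFactor, if_neg hu]
            linarith

/-! ### Peeling off the last round -/

lemma histUpTo_snoc {T : ℕ} (g : Fin T → RRecord k n) (r : RRecord k n) (t : ℕ) (ht : t ≤ T) :
    histUpTo (Fin.snoc g r) t = histUpTo g t := by
  unfold histUpTo
  congr 1
  rw [List.ofFn_succ' (Fin.snoc g r), List.concat_eq_append,
    List.take_append_of_le_length (by simpa using ht)]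
  simp [Fin.snoc_castSucc]

lemma obsHist_snoc {T : ℕ} (g : Fin T → RRecord k n) (r : RRecord k n) (t : ℕ) (ht : t ≤ T) :
    obsHist (Fin.snoc g r) t = obsHist g t := by
  unfold obsHist
  rw [histUpTo_snoc g r t ht]

lemma trajProb_snoc (ε : ℝ) (s : RStrategy k n) (L : RLearner k n) {T : ℕ}
    (g : Fin T → RRecord k n) (r : RRecord k n) :
    trajProb ε s L (T + 1) (Fin.snoc g r)
      = trajProb ε s L T g *
        (stratDensity ε s (histUpTo g T) r.1 r.2.1 * L (obsHist g T) r.1 r.2.2) := by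
  unfold trajProb
  rw [Fin.prod_univ_castSucc]
  congr 1
  · refine Finset.prod_congr rfl fun t _ => ?_
    rw [Fin.snoc_castSucc, Fin.coe_castSucc,
      histUpTo_snoc g r t (le_of_lt t.isLt), obsHist_snoc g r t (le_of_lt t.isLt)]
  · rw [Fin.snoc_last, Fin.val_last, histUpTo_snoc g r T le_rfl, obsHist_snoc g r T le_rfl]

lemma step_d_nonneg {ε : ℝ} (hε0 : 0 ≤ ε) (hε2 : ε ≤ 1/2) (s : RStrategy k n)
    {L : RLearner k n} (hL : IsRLearner L) (d : RRecord k n → ℝ)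
    (hd : ∀ (A : RAdviceM k n) (a : RArm k),
      0 ≤ ∑ Ls : RLossState k, lossDensity ε s A Ls * d (A, Ls, a))
    (hist : List (RRecord k n)) (obsh : List (RObs k n)) :
    0 ≤ ∑ r : RRecord k n, stratDensity ε s hist r.1 r.2.1 * L obsh r.1 r.2.2 * d r := by
  rw [Fintype.sum_prod_type]
  refine Finset.sum_nonneg fun A _ => ?_
  rw [Fintype.sum_prod_type]
  rw [Finset.sum_comm]
  refine Finset.sum_nonneg fun a _ => ?_
  have h1 : ∀ Ls : RLossState k,
      stratDensity ε s hist A Ls * L obsh A a * d (A, Ls, a)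
        = (adviceDensity hist A * L obsh A a) * (lossDensity ε s A Ls * d (A, Ls, a)) := by
    intro Ls
    simp only [stratDensity]
    ring
  calc (0:ℝ) ≤ (adviceDensity hist A * L obsh A a) *
        ∑ Ls : RLossState k, lossDensity ε s A Ls * d (A, Ls, a) :=
        mul_nonneg (mul_nonneg (adviceDensity_nonneg _ _) ((hL obsh A).1 a)) (hd A a)
    _ = ∑ Ls : RLossState k,
        stratDensity ε s hist A Ls * L obsh A a * d (A, Ls, a) := by
        rw [Finset.mul_sum]
        exact Finset.sum_congr rfl fun Ls _ => (h1 Ls).symm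

lemma lemM {ε : ℝ} (hε0 : 0 ≤ ε) (hε2 : ε ≤ 1/2) (s : RStrategy k n) {L : RLearner k n}
    (hL : IsRLearner L) (d : RRecord k n → ℝ)
    (hd : ∀ (A : RAdviceM k n) (a : RArm k),
      0 ≤ ∑ Ls : RLossState k, lossDensity ε s A Ls * d (A, Ls, a)) :
    ∀ (T : ℕ) (t0 : Fin T),
      0 ≤ ∑ g : Fin T → RRecord k n, trajProb ε s L T g * d (g t0) := by
  intro T
  induction T with
  | zero => exact fun t0 => t0.elim0
  | succ T IH =>
      intro t0
      have hEq := Fintype.sum_equiv (Fin.snocEquiv (fun _ : Fin (T+1) => RRecord k n))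
        (fun p : RRecord k n × (Fin T → RRecord k n) =>
          trajProb ε s L (T+1) (Fin.snoc p.2 p.1) *
            d ((Fin.snoc p.2 p.1 : Fin (T+1) → RRecord k n) t0))
        (fun g : Fin (T+1) → RRecord k n => trajProb ε s L (T+1) g * d (g t0))
        (fun p => rfl)
      rw [← hEq]
      rw [Fintype.sum_prod_type, Finset.sum_comm]
      simp only [trajProb_snoc]
      induction t0 using Fin.lastCases with
      | last =>
          simp only [Fin.snoc_last]
          refine Finset.sum_nonneg fun g _ => ?_
          have h1 : ∀ r : RRecord k n,
              trajProb ε s L T g *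
                  (stratDensity ε s (histUpTo g T) r.1 r.2.1 * L (obsHist g T) r.1 r.2.2) * d r
                = trajProb ε s L T g *
                  (stratDensity ε s (histUpTo g T) r.1 r.2.1 * L (obsHist g T) r.1 r.2.2 * d r) :=
            fun r => by ring
          rw [Finset.sum_congr rfl fun r _ => h1 r, ← Finset.mul_sum]
          exact mul_nonneg (trajProb_nonneg hε0 hε2 s hL T g)
            (step_d_nonneg hε0 hε2 s hL d hd _ _)
      | cast t =>
          simp only [Fin.snoc_castSucc]
          have h1 : ∀ g : Fin T → RRecord k n,
              (∑ r : RRecord k n,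
                trajProb ε s L T g *
                  (stratDensity ε s (histUpTo g T) r.1 r.2.1 * L (obsHist g T) r.1 r.2.2) *
                  d (g t))
                = trajProb ε s L T g * d (g t) := by
            intro g
            have h2 : ∀ r : RRecord k n,
                trajProb ε s L T g *
                    (stratDensity ε s (histUpTo g T) r.1 r.2.1 * L (obsHist g T) r.1 r.2.2) *
                    d (g t)
                  = (trajProb ε s L T g * d (g t)) *
                    (stratDensity ε s (histUpTo g T) r.1 r.2.1 * L (obsHist g T) r.1 r.2.2) :=
              fun r => by ring
            rw [Finset.sum_congr rfl fun r _ => h2 r, ← Finset.mul_sum,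
              sum_step ε s hL (histUpTo g T) (obsHist g T), mul_one]
          rw [Finset.sum_congr rfl fun g _ => h1 g]
          exact IH t

/-! ### Counting identity -/

lemma count_id {T : ℕ} (P : Fin T → Prop) [DecidablePred P] :
    (T : ℝ) - ((Finset.univ.filter P).card : ℝ)
      = ∑ t : Fin T, (if P t then (0:ℝ) else 1) := by
  have h1 : ∀ t : Fin T, (if P t then (0:ℝ) else 1) = 1 - (if P t then 1 else 0) := by
    intro t
    split <;> ring
  rw [Finset.sum_congr rfl fun t _ => h1 t, Finset.sum_sub_distrib, Finset.sum_const,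
    Finset.card_univ, Fintype.card_fin, Finset.sum_boole]
  simp

end BwEProofAux

/-- against any strategy `s` of the pool with special batch `u*`, the
pseudo-regret over `T*` rounds of any learner is at least `(ε/2)·E[T* − T_{u*}]`,
where `T_{u*}` is the number of rounds in which an arm of batch `u*` is pulled. -/
theorem stmt3 (k n : ℕ) (hk : 1 ≤ k) (hn : 10 ≤ n) (ε : ℝ) (hε : 0 < ε) (hε' : ε ≤ 0.1)
    (s : RStrategy k n) (Tstar : ℕ) (L : RLearner k n) (hL : IsRLearner L) :
    ε / 2 *
        expectR ε s L Tstar (fun g =>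
          (Tstar : ℝ) -
            ((Finset.univ.filter fun t : Fin Tstar =>
                armBatch ((g t).2.2) = specialBatch s).card : ℝ))
      ≤ pseudoRegret ε s L Tstar := by
  have hε0 : (0:ℝ) ≤ ε := le_of_lt hε
  have hε2 : ε ≤ 1/2 := by norm_num at hε' ⊢; linarith
  have hmain : ε / 2 *
        expectR ε s L Tstar (fun g =>
          (Tstar : ℝ) -
            ((Finset.univ.filter fun t : Fin Tstar =>
                armBatch ((g t).2.2) = specialBatch s).card : ℝ))
      ≤ expectR ε s L Tstar (fun g => regretVs g s) := by
    rw [← sub_nonneg]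
    have hexp : expectR ε s L Tstar (fun g => regretVs g s)
        - ε / 2 *
          expectR ε s L Tstar (fun g =>
            (Tstar : ℝ) -
              ((Finset.univ.filter fun t : Fin Tstar =>
                  armBatch ((g t).2.2) = specialBatch s).card : ℝ))
        = ∑ t : Fin Tstar, ∑ g : Fin Tstar → RRecord k n,
            trajProb ε s L Tstar g * dFun ε s (g t) := by
      simp only [expectR]
      rw [Finset.mul_sum, ← Finset.sum_sub_distrib]
      rw [Finset.sum_comm]
      refine Finset.sum_congr rfl fun g _ => ?_
      rw [count_id (fun t : Fin Tstar => armBatch ((g t).2.2) = specialBatch s)]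
      simp only [regretVs]
      rw [Finset.mul_sum, Finset.mul_sum, Finset.mul_sum, ← Finset.sum_sub_distrib]
      refine Finset.sum_congr rfl fun t _ => ?_
      simp only [dFun]
      ring
    rw [hexp]
    exact Finset.sum_nonneg fun t _ =>
      lemM hε0 hε2 s hL (dFun ε s) (fun A a => key_nonneg hε0 s A a) Tstar t
  refine le_trans hmain ?_
  exact le_ciSup (Set.Finite.bddAbove (Set.finite_range
    (fun j : RExpert k n => expectR ε s L Tstar fun g => regretVs g j))) s
end

section
/- Let α be a finite type, let Q be a probability mass function on α with Q(g) > 0 for all g ∈ α, and let P_1, …, P_n be probability mass functions on α. Then D_KL( (1/n)·Σ_{v=1}^n P_v ‖ Q ) ≤ (1/n)·Σ_{v*=1}^n ln( (1/n)·Σ_{v=1}^n Σ_{g ∈ α} P_{v*}(g)·P_v(g)/Q(g) ). -/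
open scoped BigOperators

/-- Kullback–Leibler divergence between two probability mass functions on a finite type
(with the convention `0 · ln 0 = 0`, which holds definitionally here since
`Real.log 0 = 0` and `0 * x = 0`). -/
noncomputable def klDiv {α : Type*} [Fintype α] (P Q : α → ℝ) : ℝ :=
  ∑ g, P g * Real.log (P g / Q g)

/-- for probability mass functions `P_1, …, P_n` and an everywhere-positive
probability mass function `Q` on a finite type,
`D_KL((1/n)·Σ_v P_v ‖ Q) ≤ (1/n)·Σ_{v*} ln((1/n)·Σ_v E_{P_{v*}}[P_v/Q])`. -/
theorem stmt8 {α : Type*} [Fintype α] (n : ℕ) (hn : 1 ≤ n)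
    (Q : α → ℝ) (hQpos : ∀ g, 0 < Q g) (hQ1 : ∑ g, Q g = 1)
    (P : Fin n → α → ℝ) (hPnn : ∀ v g, 0 ≤ P v g) (hP1 : ∀ v, ∑ g, P v g = 1) :
    klDiv (fun g => (1 / (n : ℝ)) * ∑ v, P v g) Q
      ≤ (1 / (n : ℝ)) * ∑ vstar : Fin n,
          Real.log ((1 / (n : ℝ)) * ∑ v : Fin n, ∑ g, P vstar g * (P v g / Q g)) := by
  have hn' : (0:ℝ) < n := by exact_mod_cast Nat.lt_of_lt_of_le Nat.zero_lt_one hn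
  set M : α → ℝ := fun g => (1 / (n : ℝ)) * ∑ v, P v g with hM
  -- Jensen step for each vstar
  have key : ∀ w : Fin n,
      ∑ g, P w g * Real.log (M g / Q g) ≤ Real.log (∑ g, P w g * (M g / Q g)) := by
    intro w
    set t := Finset.univ.filter (fun g => P w g ≠ 0) with ht
    have hzero : ∀ g ∈ Finset.univ, g ∉ t → P w g = 0 := by
      intro g _ hg
      by_contra h
      exact hg (Finset.mem_filter.mpr ⟨Finset.mem_univ g, h⟩)
    have hsum_t : ∑ g ∈ t, P w g = 1 := by
      rw [← hP1 w]
      exact Finset.sum_subset t.subset_univ hzero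
    have hmem : ∀ g ∈ t, M g / Q g ∈ Set.Ioi (0:ℝ) := by
      intro g hg
      have hPg : 0 < P w g :=
        lt_of_le_of_ne (hPnn w g) (Ne.symm (Finset.mem_filter.mp hg).2)
      have hMg : 0 < M g := by
        apply mul_pos (by positivity)
        exact lt_of_lt_of_le hPg
          (Finset.single_le_sum (fun v _ => hPnn v g) (Finset.mem_univ w))
      exact div_pos hMg (hQpos g)
    have jensen := (strictConcaveOn_log_Ioi.concaveOn).le_map_sum
      (fun g _ => hPnn w g) hsum_t hmem
    simp only [smul_eq_mul] at jensen
    calc ∑ g, P w g * Real.log (M g / Q g)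
        = ∑ g ∈ t, P w g * Real.log (M g / Q g) := by
          rw [eq_comm]
          exact Finset.sum_subset t.subset_univ (fun g h hg => by rw [hzero g h hg, zero_mul])
      _ ≤ Real.log (∑ g ∈ t, P w g * (M g / Q g)) := jensen
      _ = Real.log (∑ g, P w g * (M g / Q g)) := by
          congr 1
          exact Finset.sum_subset t.subset_univ (fun g h hg => by rw [hzero g h hg, zero_mul])
  -- rewrite the argument of the log
  have hpt : ∀ (w : Fin n) (g : α), P w g * (M g / Q g)
      = ∑ v : Fin n, (1 / (n : ℝ)) * (P w g * (P v g / Q g)) := by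
    intro w g
    simp only [hM]
    rw [← Finset.mul_sum, ← Finset.mul_sum, ← Finset.sum_div]
    ring
  have harg : ∀ w : Fin n,
      ∑ g, P w g * (M g / Q g)
        = (1 / (n : ℝ)) * ∑ v : Fin n, ∑ g, P w g * (P v g / Q g) := by
    intro w
    calc ∑ g, P w g * (M g / Q g)
        = ∑ g, ∑ v : Fin n, (1 / (n : ℝ)) * (P w g * (P v g / Q g)) :=
          Finset.sum_congr rfl (fun g _ => hpt w g)
      _ = ∑ v : Fin n, ∑ g, (1 / (n : ℝ)) * (P w g * (P v g / Q g)) := Finset.sum_comm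
      _ = (1 / (n : ℝ)) * ∑ v : Fin n, ∑ g, P w g * (P v g / Q g) := by
          simp only [← Finset.mul_sum]
  -- expand klDiv
  have hexp : klDiv M Q
      = (1 / (n : ℝ)) * ∑ w : Fin n, ∑ g, P w g * Real.log (M g / Q g) := by
    unfold klDiv
    calc ∑ g, M g * Real.log (M g / Q g)
        = ∑ g, ∑ w : Fin n, (1 / (n : ℝ)) * (P w g * Real.log (M g / Q g)) := by
          refine Finset.sum_congr rfl (fun g _ => ?_)
          simp only [hM]
          rw [← Finset.mul_sum, ← Finset.sum_mul]
          ring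
      _ = ∑ w : Fin n, ∑ g, (1 / (n : ℝ)) * (P w g * Real.log (M g / Q g)) := Finset.sum_comm
      _ = (1 / (n : ℝ)) * ∑ w : Fin n, ∑ g, P w g * Real.log (M g / Q g) := by
          simp only [← Finset.mul_sum]
  calc klDiv M Q
      = (1 / (n : ℝ)) * ∑ w : Fin n, ∑ g, P w g * Real.log (M g / Q g) := hexp
    _ ≤ (1 / (n : ℝ)) * ∑ w : Fin n, Real.log (∑ g, P w g * (M g / Q g)) := by
        apply mul_le_mul_of_nonneg_left _ (by positivity)
        exact Finset.sum_le_sum (fun w _ => key w)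
    _ = (1 / (n : ℝ)) * ∑ w : Fin n,
          Real.log ((1 / (n : ℝ)) * ∑ v : Fin n, ∑ g, P w g * (P v g / Q g)) := by
        congr 1
        exact Finset.sum_congr rfl (fun w _ => by rw [harg w])
end
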